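/- (Example 5.1, the vertical rolling disk: the one-form produced by the Chaplygin Hamilton–Jacobi method solves the nonholonomic Hamilton–Jacobi equation.) Let m, I, J, R > 0 and let γ_φ⁰, γ_ψ⁰, E ∈ ℝ satisfy (1/2)·[(γ_φ⁰)²/J + (I + mR²)·(γ_ψ⁰)²/I²] = E. Define the one-form γ on ℝ⁴ by γ(φ,x,y,ψ) = γ_φ⁰ dφ + (mR/I)·cos φ·γ_ψ⁰ dx + (mR/I)·sin φ·γ_ψ⁰ dy + γ_ψ⁰ dψ. Then: (i) H(q, γ(q)) = E for all q ∈ ℝ⁴; and (ii) dγ_q(u, v) = 0 for all q ∈ ℝ⁴ and all u, v ∈ D_q. -/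

import Mathlib

noncomputable section

open Matrix

/-- Hamiltonian of the vertical rolling disk, coordinates `q = (φ, x, y, ψ)`
(indices 0,1,2,3) and momenta `p = (p_φ, p_x, p_y, p_ψ)`. -/
def diskH (m I J : ℝ) (p : Fin 4 → ℝ) : ℝ :=
  ((p 1) ^ 2 + (p 2) ^ 2) / (2 * m) + (p 0) ^ 2 / (2 * J) + (p 3) ^ 2 / (2 * I)

/-- Constraint distribution of the vertical rolling disk, spanned by
`∂_φ` and `∂_ψ + R cos φ ∂_x + R sin φ ∂_y`. -/
def diskD (R : ℝ) (q : Fin 4 → ℝ) : Submodule ℝ (Fin 4 → ℝ) :=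
  Submodule.span ℝ
    ({![1, 0, 0, 0], ![0, R * Real.cos (q 0), R * Real.sin (q 0), 1]} : Set (Fin 4 → ℝ))

/-- The one-form produced by the Chaplygin Hamilton–Jacobi method:
`γ = γ_φ⁰ dφ + (mR/I) cos φ γ_ψ⁰ dx + (mR/I) sin φ γ_ψ⁰ dy + γ_ψ⁰ dψ`. -/
def diskGamma (m I R γφ0 γψ0 : ℝ) (q : Fin 4 → ℝ) : Fin 4 → ℝ :=
  ![γφ0, m * R / I * Real.cos (q 0) * γψ0, m * R / I * Real.sin (q 0) * γψ0, γψ0]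

lemma diskGamma_hasFDerivAt (m I R γφ0 γψ0 : ℝ) (q : Fin 4 → ℝ) :
    HasFDerivAt (diskGamma m I R γφ0 γψ0)
      (ContinuousLinearMap.pi ![(0 : (Fin 4 → ℝ) →L[ℝ] ℝ),
        (-(m * R / I * Real.sin (q 0) * γψ0)) •
          (ContinuousLinearMap.proj 0 : (Fin 4 → ℝ) →L[ℝ] ℝ),
        (m * R / I * Real.cos (q 0) * γψ0) •
          (ContinuousLinearMap.proj 0 : (Fin 4 → ℝ) →L[ℝ] ℝ),
        (0 : (Fin 4 → ℝ) →L[ℝ] ℝ)]) q := by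
  rw [hasFDerivAt_pi']
  intro i
  have hproj : HasFDerivAt (fun p : Fin 4 → ℝ => p 0)
      (ContinuousLinearMap.proj (R := ℝ) (φ := fun _ : Fin 4 => ℝ) 0) q := by
    exact (ContinuousLinearMap.proj (R := ℝ) (φ := fun _ : Fin 4 => ℝ)
      (0 : Fin 4)).hasFDerivAt (x := q)
  have hcos : HasFDerivAt (fun p : Fin 4 → ℝ => Real.cos (p 0))
      ((-Real.sin (q 0)) • ContinuousLinearMap.proj (R := ℝ) (φ := fun _ : Fin 4 => ℝ) (0 : Fin 4)) q :=
    by have := (Real.hasDerivAt_cos (q 0)).comp_hasFDerivAt q hproj; exact this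
  have hsin : HasFDerivAt (fun p : Fin 4 → ℝ => Real.sin (p 0))
      ((Real.cos (q 0)) • ContinuousLinearMap.proj (R := ℝ) (φ := fun _ : Fin 4 => ℝ) (0 : Fin 4)) q :=
    by have := (Real.hasDerivAt_sin (q 0)).comp_hasFDerivAt q hproj; exact this
  fin_cases i <;>
    simp only [diskGamma, ContinuousLinearMap.proj_pi, Matrix.cons_val_zero,
      Matrix.cons_val_one, Matrix.head_cons, Fin.mk_zero, Fin.mk_one,
      Matrix.cons_val_two, Matrix.cons_val_three, Matrix.tail_cons, Fin.isValue]
  · exact hasFDerivAt_const _ _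
  · have := (hcos.const_mul (m * R / I)).mul_const γψ0
    refine HasFDerivAt.congr_fderiv this ?_
    ext u
    simp [ContinuousLinearMap.smul_apply]
    ring
  · have := (hsin.const_mul (m * R / I)).mul_const γψ0
    simp only [Fin.reduceFinMk, Matrix.cons_val]
    refine HasFDerivAt.congr_fderiv this ?_
    ext u
    simp [ContinuousLinearMap.smul_apply]
    ring
  · exact hasFDerivAt_const _ _

lemma fderiv_diskGamma (m I R γφ0 γψ0 : ℝ) (q u : Fin 4 → ℝ) :
    fderiv ℝ (diskGamma m I R γφ0 γψ0) q u =
      ![0, -(m * R / I * Real.sin (q 0) * γψ0) * u 0,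
        (m * R / I * Real.cos (q 0) * γψ0) * u 0, 0] := by
  rw [(diskGamma_hasFDerivAt m I R γφ0 γψ0 q).fderiv]
  funext i
  fin_cases i <;> simp

theorem statement16 (m I J R : ℝ) (hm : 0 < m) (hI : 0 < I) (hJ : 0 < J) (hR : 0 < R)
    (γφ0 γψ0 E : ℝ)
    (hE : (1 / 2) * (γφ0 ^ 2 / J + (I + m * R ^ 2) * γψ0 ^ 2 / I ^ 2) = E) :
    -- (i) the nonholonomic Hamilton–Jacobi equation
    (∀ q : Fin 4 → ℝ, diskH m I J (diskGamma m I R γφ0 γψ0 q) = E)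
      -- (ii) dγ vanishes on the constraint distribution
      ∧ (∀ q : Fin 4 → ℝ, ∀ u ∈ diskD R q, ∀ v ∈ diskD R q,
          fderiv ℝ (diskGamma m I R γφ0 γψ0) q u ⬝ᵥ v
            - fderiv ℝ (diskGamma m I R γφ0 γψ0) q v ⬝ᵥ u = 0) := by
  constructor
  · intro q
    rw [← hE]
    simp only [diskH, diskGamma, Matrix.cons_val_zero, Matrix.cons_val_one, Matrix.head_cons,
      Matrix.cons_val_two, Matrix.cons_val_three, Matrix.tail_cons]
    have h := Real.sin_sq_add_cos_sq (q 0)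
    field_simp
    linear_combination (m * R ^ 2 * γψ0 ^ 2 * J) * h
  · intro q u hu v hv
    rw [diskD, Submodule.mem_span_pair] at hu hv
    obtain ⟨a, b, rfl⟩ := hu
    obtain ⟨c, d, rfl⟩ := hv
    rw [fderiv_diskGamma, fderiv_diskGamma]
    have h0 : ∀ (a b : ℝ),
        (a • ![(1:ℝ), 0, 0, 0] + b • ![0, R * Real.cos (q 0), R * Real.sin (q 0), 1]) 0 = a := by
      intro a b; simp
    rw [h0, h0]
    simp [dotProduct, Fin.sum_univ_four, Matrix.cons_val_zero, Matrix.cons_val_one]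
    ring
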